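/- Let S be a free numerical semigroup generated by a telescopic sequence T = (t_0, …, t_k) with gcd(T) = 1, let c(T) = (c_1, …, c_k), and let I = {0 ≤ i ≤ k : t_i is even}. If t_0 is odd, then O(G(S)) − E(G(S)) = −1/2 + (1/2)∏_{i ∈ I} c_i; equivalently, 2(O(G(S)) − E(G(S))) = −1 + ∏_{i ∈ I} c_i. -/

import Mathlib

/-- The monoid `⟨t_0, …, t_{n-1}⟩` of all nonnegative integer linear combinations of
the first `n` terms of the sequence `t`. -/
def genBy (t : ℕ → ℕ) (n : ℕ) : Set ℕ :=
  {s | ∃ x : ℕ → ℕ, s = ∑ i ∈ Finset.range n, x i * t i}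

/-- `d_i = gcd(t_0, …, t_i)`. -/
def seqD (t : ℕ → ℕ) (i : ℕ) : ℕ := Finset.gcd (Finset.range (i + 1)) t

/-- `c_j = d_{j-1} / d_j` (for `j ≥ 1`). -/
def seqC (t : ℕ → ℕ) (j : ℕ) : ℕ := seqD t (j - 1) / seqD t j

/-- The sequence `(t_0, …, t_k)` of positive integers is telescopic if
`c_j · t_j ∈ ⟨t_0, …, t_{j-1}⟩` for every `j = 1, …, k`. -/
def IsTelescopic (t : ℕ → ℕ) (k : ℕ) : Prop :=
  (∀ i ≤ k, 0 < t i) ∧ ∀ j, 1 ≤ j → j ≤ k → seqC t j * t j ∈ genBy t j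

/-- `O(T)`: the number of odd elements of `T`. -/
noncomputable def countOdd (T : Set ℕ) : ℕ := {x ∈ T | Odd x}.ncard

/-- `E(T)`: the number of even elements of `T`. -/
noncomputable def countEven (T : Set ℕ) : ℕ := {x ∈ T | Even x}.ncard

lemma zero_mem_genBy (t : ℕ → ℕ) (n : ℕ) : 0 ∈ genBy t n := ⟨fun _ => 0, by simp⟩

lemma add_mem_genBy {t : ℕ → ℕ} {n a b : ℕ} (ha : a ∈ genBy t n) (hb : b ∈ genBy t n) :
    a + b ∈ genBy t n := by
  obtain ⟨x, hx⟩ := ha; obtain ⟨y, hy⟩ := hb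
  exact ⟨fun i => x i + y i, by simp [hx, hy, add_mul, Finset.sum_add_distrib]⟩

lemma mul_mem_genBy {t : ℕ → ℕ} {n a : ℕ} (m : ℕ) (ha : a ∈ genBy t n) :
    m * a ∈ genBy t n := by
  obtain ⟨x, hx⟩ := ha
  exact ⟨fun i => m * x i, by rw [hx, Finset.mul_sum]; simp [mul_assoc]⟩

lemma term_mem_genBy {t : ℕ → ℕ} {n i : ℕ} (h : i < n) : t i ∈ genBy t n := by
  refine ⟨fun j => if j = i then 1 else 0, ?_⟩
  rw [Finset.sum_eq_single i (fun b _ hb => by simp [hb])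
    (fun hi => absurd (Finset.mem_range.2 h) hi)]
  simp

lemma genBy_mono {t : ℕ → ℕ} {n m : ℕ} (h : n ≤ m) : genBy t n ⊆ genBy t m := by
  rintro s ⟨x, rfl⟩
  refine ⟨fun i => if i < n then x i else 0, ?_⟩
  rw [← Finset.sum_subset (Finset.range_subset_range.2 h)
    (fun i _ hi => by simp [Finset.mem_range] at hi; simp [hi])]
  exact Finset.sum_congr rfl (fun i hi => by simp [Finset.mem_range.1 hi])

lemma seqD_dvd (t : ℕ → ℕ) {i j : ℕ} (h : j ≤ i) : seqD t i ∣ t j :=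
  Finset.gcd_dvd (Finset.mem_range.2 (Nat.lt_succ_of_le h))

lemma seqD_dvd_seqD (t : ℕ → ℕ) {i j : ℕ} (h : j ≤ i) : seqD t i ∣ seqD t j :=
  Finset.dvd_gcd fun b hb => seqD_dvd t (le_trans (Nat.lt_succ_iff.1 (Finset.mem_range.1 hb)) h)

lemma seqD_pos {t : ℕ → ℕ} (ht : 0 < t 0) (i : ℕ) : 0 < seqD t i :=
  Nat.pos_of_dvd_of_pos (seqD_dvd t (Nat.zero_le i)) ht

lemma seqD_succ (t : ℕ → ℕ) (i : ℕ) : seqD t (i + 1) = Nat.gcd (t (i + 1)) (seqD t i) := by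
  unfold seqD
  rw [Finset.range_add_one, Finset.gcd_insert]
  rfl

lemma genBy_div {t : ℕ → ℕ} {n d : ℕ} (hd : 0 < d) (hdvd : ∀ i < n, d ∣ t i) {s : ℕ} :
    s ∈ genBy t n ↔ ∃ m ∈ genBy (fun i => t i / d) n, s = d * m := by
  constructor
  · rintro ⟨x, rfl⟩
    refine ⟨∑ i ∈ Finset.range n, x i * (t i / d), ⟨x, rfl⟩, ?_⟩
    rw [Finset.mul_sum]
    refine Finset.sum_congr rfl fun i hi => ?_
    rw [← mul_assoc, mul_comm d (x i), mul_assoc,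
      Nat.mul_div_cancel' (hdvd i (Finset.mem_range.1 hi))]
  · rintro ⟨m, ⟨x, rfl⟩, rfl⟩
    refine ⟨x, ?_⟩
    rw [Finset.mul_sum]
    refine Finset.sum_congr rfl fun i hi => ?_
    rw [← mul_assoc, mul_comm d (x i), mul_assoc,
      Nat.mul_div_cancel' (hdvd i (Finset.mem_range.1 hi))]

lemma seqD_div {t : ℕ → ℕ} {d : ℕ} (hd : 0 < d) {j : ℕ} (hdvd : ∀ i ≤ j, d ∣ t i) :
    seqD (fun i => t i / d) j = seqD t j / d := by
  have h1 : (Finset.range (j+1)).gcd (fun i => d * (t i / d)) =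
      d * (Finset.range (j+1)).gcd (fun i => t i / d) := by
    rw [Finset.gcd_mul_left]; simp
  have h2 : (Finset.range (j+1)).gcd (fun i => d * (t i / d)) = seqD t j :=
    Finset.gcd_congr rfl fun i hi =>
      Nat.mul_div_cancel' (hdvd i (Nat.lt_succ_iff.1 (Finset.mem_range.1 hi)))
  have h3 : seqD t j = d * seqD (fun i => t i / d) j := by
    rw [← h2, h1]; rfl
  rw [h3, Nat.mul_div_cancel_left _ hd]

lemma alt_sum (q : ℕ) : ∑ j ∈ Finset.range q, (-1:ℤ)^j = if Even q then 0 else 1 := by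
  induction q with
  | zero => simp
  | succ n ih =>
    rw [Finset.sum_range_succ, ih]
    rcases Nat.even_or_odd n with h | h
    · simp [h, Nat.even_add_one, h.neg_one_pow]
    · simp [Nat.not_even_iff_odd.2 h, Nat.even_add_one, h.neg_one_pow]

lemma res_inj {d T : ℕ} (hcop : Nat.gcd d T = 1) :
    ∀ x ∈ Finset.range d, ∀ y ∈ Finset.range d, x * T % d = y * T % d → x = y := by
  intro a ha b hb hab
  have h1 : a * T ≡ b * T [MOD d] := hab
  have h2 : a ≡ b [MOD d] := Nat.ModEq.cancel_right_of_coprime hcop h1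
  have h3 : a % d = b % d := h2
  simp only [Finset.mem_range] at ha hb
  rwa [Nat.mod_eq_of_lt ha, Nat.mod_eq_of_lt hb] at h3

lemma res_img {d T : ℕ} (hd : 0 < d) (hcop : Nat.gcd d T = 1) :
    (Finset.range d).image (fun x => x * T % d) = Finset.range d := by
  apply Finset.eq_of_subset_of_card_le
  · intro r hr
    obtain ⟨x, _, rfl⟩ := Finset.mem_image.1 hr
    exact Finset.mem_range.2 (Nat.mod_lt _ hd)
  · rw [Finset.card_image_of_injOn]
    intro a ha b hb hab
    exact res_inj hcop a (by simpa using ha) b (by simpa using hb) hab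

lemma res_sum {d T : ℕ} (hd : 0 < d) (hcop : Nat.gcd d T = 1) (f : ℕ → ℤ) :
    ∑ x ∈ Finset.range d, f (x * T % d) = ∑ r ∈ Finset.range d, f r := by
  conv_rhs => rw [← res_img hd hcop]
  rw [Finset.sum_image (res_inj hcop)]

/-- The block of potential gaps in the residue class of `x*T` mod `d`:
`{x*T + d*g : g ∈ G'} ∪ {n < x*T : n ≡ x*T [MOD d]}`. -/
def gapBlock (G' : Finset ℕ) (d T x : ℕ) : Finset ℕ :=
  G'.image (fun g => x * T + d * g) ∪
    (Finset.range (x * T / d)).image (fun j => x * T % d + d * j)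

lemma mem_B_iff {d T x n : ℕ} (hd : 0 < d) :
    n ∈ (Finset.range (x * T / d)).image (fun j => x * T % d + d * j) ↔
      n % d = x * T % d ∧ n < x * T := by
  constructor
  · rintro hn
    obtain ⟨j, hj, rfl⟩ := Finset.mem_image.1 hn
    have hj' := Finset.mem_range.1 hj
    constructor
    · rw [Nat.add_mul_mod_self_left, Nat.mod_mod_of_dvd _ dvd_rfl]
    · have h2 := Nat.div_add_mod (x * T) d
      have h3 : d * (j + 1) ≤ d * (x * T / d) := Nat.mul_le_mul le_rfl hj'
      rw [Nat.mul_succ] at h3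
      linarith
  · rintro ⟨hmod, hlt⟩
    refine Finset.mem_image.2 ⟨n / d, Finset.mem_range.2 ?_, ?_⟩
    · have h1 := Nat.div_add_mod n d
      have h2 := Nat.div_add_mod (x * T) d
      have h3 : d * (n / d) < d * (x * T / d) := by linarith
      exact lt_of_mul_lt_mul_left h3 (Nat.zero_le d)
    · have h1 := Nat.div_add_mod n d
      linarith
lemma gapBlock_mod {G' : Finset ℕ} {d T x n : ℕ} (hd : 0 < d)
    (hn : n ∈ gapBlock G' d T x) : n % d = x * T % d := by
  rcases Finset.mem_union.1 hn with h | h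
  · obtain ⟨g, _, rfl⟩ := Finset.mem_image.1 h
    exact Nat.add_mul_mod_self_left _ _ _
  · exact ((mem_B_iff hd).1 h).1

lemma sum_gapBlock {G' : Finset ℕ} {d T : ℕ} (hd : 0 < d) (hdodd : Odd d) (x : ℕ) :
    ∑ n ∈ gapBlock G' d T x, (-1:ℤ)^n
      = (-1)^(x*T) * (∑ g ∈ G', (-1:ℤ)^g)
        + (-1)^(x*T % d) * (if Even (x*T/d) then 0 else 1) := by
  have hABdisj : Disjoint (G'.image (fun g => x * T + d * g))
      ((Finset.range (x * T / d)).image (fun j => x * T % d + d * j)) := by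
    refine Finset.disjoint_left.2 fun n hnA hnB => ?_
    obtain ⟨g, _, rfl⟩ := Finset.mem_image.1 hnA
    have := ((mem_B_iff hd).1 hnB).2
    omega
  rw [gapBlock, Finset.sum_union hABdisj]
  congr 1
  · rw [Finset.sum_image (fun a _ b _ h => by
      have h2 : d * a = d * b := by omega
      exact Nat.eq_of_mul_eq_mul_left hd h2), Finset.mul_sum]
    refine Finset.sum_congr rfl fun g _ => ?_
    rw [pow_add]
    congr 1
    rw [pow_mul, hdodd.neg_one_pow]
  · rw [Finset.sum_image (fun a _ b _ h => by
      have h2 : d * a = d * b := by omega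
      exact Nat.eq_of_mul_eq_mul_left hd h2), ← alt_sum, Finset.mul_sum]
    refine Finset.sum_congr rfl fun j _ => ?_
    rw [pow_add, pow_mul, hdodd.neg_one_pow]

lemma main_ind (k : ℕ) : ∀ t : ℕ → ℕ, IsTelescopic t k → seqD t k = 1 → Odd (t 0) →
    ∃ G : Finset ℕ, ↑G = (genBy t (k+1))ᶜ ∧
      2 * ∑ n ∈ G, (-1:ℤ)^n
        = 1 - ∏ i ∈ (Finset.range (k+1)).filter (fun i => Even (t i)), (seqC t i : ℤ) := by
  induction k with
  | zero =>
    intro t _ hgcd h0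
    have ht0 : t 0 = 1 := by
      have h : seqD t 0 = t 0 := by
        unfold seqD; simp
      omega
    refine ⟨∅, ?_, ?_⟩
    · have huniv : genBy t 1 = Set.univ := by
        ext n
        simp only [Set.mem_univ, iff_true]
        exact ⟨fun _ => n, by simp [ht0]⟩
      simp [huniv]
    · have hfe : (Finset.range 1).filter (fun i => Even (t i)) = ∅ := by
        rw [Finset.filter_eq_empty_iff]
        intro i hi
        simp only [Finset.mem_range, Nat.lt_one_iff] at hi
        subst hi
        exact Nat.not_even_iff_odd.2 h0
      rw [hfe]; simp
  | succ k ih =>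
    intro t htel hgcd h0
    set d := seqD t k with hd
    set T := t (k+1) with hTdef
    have hd0 : 0 < d := seqD_pos (htel.1 0 (by omega)) k
    have hdvd : ∀ i ≤ k, d ∣ t i := fun i hi => seqD_dvd t hi
    have hdodd : Odd d := by
      obtain ⟨c, hc⟩ := hdvd 0 (Nat.zero_le k)
      exact (Nat.odd_mul.1 (hc ▸ h0)).1
    have hcop : Nat.gcd d T = 1 := by
      have := seqD_succ t k
      rw [hgcd] at this
      rw [Nat.gcd_comm]
      exact this.symm
    have hC : seqC t (k+1) = d := by
      unfold seqC
      rw [hgcd]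
      simp [hd]
    have hdT : d * T ∈ genBy t (k+1) := by
      have := htel.2 (k+1) (by omega) le_rfl
      rwa [hC] at this
    set t' : ℕ → ℕ := fun i => t i / d with ht'
    have ht'eq : ∀ i ≤ k, t i = d * t' i := fun i hi => (Nat.mul_div_cancel' (hdvd i hi)).symm
    have hsd : ∀ j ≤ k, seqD t' j = seqD t j / d :=
      fun j hj => seqD_div hd0 (fun i hi => hdvd i (le_trans hi hj))
    have hsc : ∀ j, 1 ≤ j → j ≤ k → seqC t' j = seqC t j := by
      intro j h1 h2
      have hba : seqD t j ∣ seqD t (j-1) := seqD_dvd_seqD t (by omega)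
      have hdb : d ∣ seqD t j := seqD_dvd_seqD t h2
      have hb0 : 0 < seqD t j := seqD_pos (htel.1 0 (by omega)) j
      obtain ⟨c, hc⟩ := hba
      have hb'0 : 0 < seqD t j / d := Nat.div_pos (Nat.le_of_dvd hb0 hdb) hd0
      have had : seqD t (j-1) / d = c * (seqD t j / d) := by
        rw [hc, mul_comm, Nat.mul_div_assoc c hdb]
      unfold seqC
      rw [hsd j h2, hsd (j-1) (by omega), had, Nat.mul_div_cancel _ hb'0, hc,
        mul_comm, Nat.mul_div_cancel _ hb0]
    have ht'tel : IsTelescopic t' k := by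
      constructor
      · intro i hi
        exact Nat.div_pos (Nat.le_of_dvd (htel.1 i (by omega)) (hdvd i hi)) hd0
      · intro j h1 h2
        have hmem := htel.2 j h1 (by omega)
        obtain ⟨m, hm, heq⟩ := (genBy_div hd0 (fun i hi => hdvd i (by omega))).1 hmem
        have : seqC t j * t j = d * (seqC t j * t' j) := by
          rw [ht'eq j h2]; ring
        rw [this] at heq
        have hmeq : m = seqC t j * t' j := by
          exact (Nat.eq_of_mul_eq_mul_left hd0 heq.symm)
        rw [hsc j h1 h2, ← hmeq]
        exact hm
    have ht'gcd : seqD t' k = 1 := by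
      rw [hsd k le_rfl, ← hd, Nat.div_self hd0]
    have h0' : Odd (t' 0) := by
      have := ht'eq 0 (Nat.zero_le k)
      rw [this] at h0
      exact (Nat.odd_mul.1 h0).2
    obtain ⟨G', hG'c, hG's⟩ := ih t' ht'tel ht'gcd h0'
    -- membership characterization
    have hmemS : ∀ n : ℕ, n ∈ genBy t (k+2) ↔
        ∃ x < d, ∃ m ∈ genBy t' (k+1), n = x * T + d * m := by
      intro n
      constructor
      · rintro ⟨x, rfl⟩
        rw [Finset.sum_range_succ]
        have hhead : (∑ i ∈ Finset.range (k+1), x i * t i) ∈ genBy t (k+1) := ⟨x, rfl⟩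
        have h2 : (∑ i ∈ Finset.range (k+1), x i * t i) + (x (k+1) / d) * (d * T)
            ∈ genBy t (k+1) := add_mem_genBy hhead (mul_mem_genBy _ hdT)
        obtain ⟨m, hm, heq⟩ := (genBy_div hd0 (fun i hi => hdvd i (by omega))).1 h2
        refine ⟨x (k+1) % d, Nat.mod_lt _ hd0, m, hm, ?_⟩
        have hx : x (k+1) * T = (x (k+1) / d) * (d * T) + (x (k+1) % d) * T := by
          calc x (k+1) * T = (d * (x (k+1) / d) + x (k+1) % d) * T := by
                rw [Nat.div_add_mod]
            _ = _ := by ring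
        rw [← hTdef, hx, ← add_assoc, heq]
        exact add_comm _ _
      · rintro ⟨x, hx, m, hm, rfl⟩
        have h1 : d * m ∈ genBy t (k+1) :=
          (genBy_div hd0 (fun i hi => hdvd i (by omega))).2 ⟨m, hm, rfl⟩
        have h2 : d * m ∈ genBy t (k+2) := genBy_mono (by omega) h1
        have h3 : x * T ∈ genBy t (k+2) := mul_mem_genBy x (term_mem_genBy (by omega))
        exact add_mem_genBy h3 h2
    have hG'mem : ∀ g : ℕ, g ∈ G' ↔ g ∉ genBy t' (k+1) := by
      intro g
      rw [← Finset.mem_coe, hG'c, Set.mem_compl_iff]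
    have hCdisj : Set.PairwiseDisjoint ↑(Finset.range d) (gapBlock G' d T) := by
      intro x hx y hy hxy
      refine Finset.disjoint_left.2 fun n hnx hny => hxy ?_
      exact res_inj hcop x (Finset.mem_coe.1 hx) y (Finset.mem_coe.1 hy)
        ((gapBlock_mod hd0 hnx).symm.trans (gapBlock_mod hd0 hny))
    have hGiff : ∀ n : ℕ,
        n ∈ (Finset.range d).biUnion (gapBlock G' d T) ↔ n ∉ genBy t (k+2) := by
      intro n
      constructor
      · intro hn hnS
        obtain ⟨x, hx, hnC⟩ := Finset.mem_biUnion.1 hn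
        obtain ⟨x', hx', m, hm, hneq⟩ := (hmemS n).1 hnS
        have hxx : x = x' := res_inj hcop x hx x' (Finset.mem_range.2 hx')
          (by rw [← gapBlock_mod hd0 hnC, hneq, Nat.add_mul_mod_self_left])
        subst hxx
        rcases Finset.mem_union.1 hnC with h | h
        · obtain ⟨g, hg, hgeq⟩ := Finset.mem_image.1 h
          have h2 : x * T + d * g = x * T + d * m := hgeq.trans hneq
          have hgm : g = m := Nat.eq_of_mul_eq_mul_left hd0 (Nat.add_left_cancel h2)
          exact (hG'mem g).1 hg (hgm ▸ hm)
        · have hlt := ((mem_B_iff hd0).1 h).2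
          have hge : x * T ≤ n := hneq ▸ Nat.le_add_right _ _
          exact absurd hge (not_le.2 hlt)
      · intro hnS
        have hmem2 : n % d ∈ (Finset.range d).image (fun x => x * T % d) := by
          rw [res_img hd0 hcop]
          exact Finset.mem_range.2 (Nat.mod_lt _ hd0)
        obtain ⟨x, hx, hxres⟩ := Finset.mem_image.1 hmem2
        refine Finset.mem_biUnion.2 ⟨x, hx, ?_⟩
        rcases le_or_gt (x * T) n with hle | hlt
        · have hmod : x * T ≡ n [MOD d] := hxres
          obtain ⟨g, hg⟩ := (Nat.modEq_iff_dvd' hle).1 hmod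
          have hneq : n = x * T + d * g := by
            have h3 := Nat.eq_add_of_sub_eq hle hg
            linarith
          refine Finset.mem_union_left _ (Finset.mem_image.2 ⟨g, ?_, hneq.symm⟩)
          exact (hG'mem g).2 fun hgS =>
            hnS ((hmemS n).2 ⟨x, Finset.mem_range.1 hx, g, hgS, hneq⟩)
        · exact Finset.mem_union_right _ ((mem_B_iff hd0).2 ⟨hxres.symm, hlt⟩)
    have hkey : ∀ x : ℕ, 2 * ((-1:ℤ)^(x*T % d) * (if Even (x*T/d) then 0 else 1))
        = (-1)^(x*T % d) - (-1)^(x*T) := by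
      intro x
      have hxT : (-1:ℤ)^(x*T) = (-1)^(x*T/d) * (-1)^(x*T % d) := by
        conv_lhs => rw [← Nat.div_add_mod (x*T) d]
        rw [pow_add]
        congr 1
        rw [pow_mul, hdodd.neg_one_pow]
      rcases Nat.even_or_odd (x*T/d) with h | h
      · rw [if_pos h, hxT, h.neg_one_pow]; ring
      · rw [if_neg (Nat.not_even_iff_odd.2 h), hxT, h.neg_one_pow]; ring
    have heps1 : ∑ x ∈ Finset.range d, (-1:ℤ)^(x*T % d) = 1 := by
      rw [res_sum hd0 hcop (fun r => (-1:ℤ)^r), alt_sum, if_neg (Nat.not_even_iff_odd.2 hdodd)]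
    have heps : ∑ x ∈ Finset.range d, (-1:ℤ)^(x*T) = if Even T then (d:ℤ) else 1 := by
      rcases Nat.even_or_odd T with h | h
      · rw [if_pos h, Finset.sum_congr rfl (fun x _ => (h.mul_left x).neg_one_pow)]
        simp
      · rw [if_neg (Nat.not_even_iff_odd.2 h),
          Finset.sum_congr rfl (fun x _ => by rw [mul_comm, pow_mul, h.neg_one_pow]),
          alt_sum, if_neg (Nat.not_even_iff_odd.2 hdodd)]
    have hprod : ∏ i ∈ (Finset.range (k+1+1)).filter (fun i => Even (t i)), (seqC t i : ℤ)
        = (∏ i ∈ (Finset.range (k+1)).filter (fun i => Even (t' i)), (seqC t' i : ℤ))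
          * (if Even T then (d:ℤ) else 1) := by
      rw [Finset.prod_filter, Finset.prod_filter, Finset.prod_range_succ]
      congr 1
      · refine Finset.prod_congr rfl fun i hi => ?_
        have hik : i ≤ k := Nat.lt_succ_iff.1 (Finset.mem_range.1 hi)
        rcases Nat.eq_zero_or_pos i with rfl | hi1
        · rw [if_neg (Nat.not_even_iff_odd.2 h0), if_neg (Nat.not_even_iff_odd.2 h0')]
        · have hEv : Even (t i) ↔ Even (t' i) := by
            rw [ht'eq i hik, Nat.even_mul]
            simp [Nat.not_even_iff_odd.2 hdodd]
          rcases em (Even (t i)) with h | h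
          · rw [if_pos h, if_pos (hEv.1 h), hsc i hi1 hik]
          · rw [if_neg h, if_neg (fun hh => h (hEv.2 hh))]
      · rw [← hTdef, hC]
    refine ⟨(Finset.range d).biUnion (gapBlock G' d T), ?_, ?_⟩
    · exact Set.ext fun n => (Finset.mem_coe).trans
        ((hGiff n).trans (Set.mem_compl_iff _ _).symm)
    · have hstep : ∀ x ∈ Finset.range d,
          2 * ∑ n ∈ gapBlock G' d T x, (-1:ℤ)^n
          = (-1)^(x*T) * (2 * ∑ g ∈ G', (-1:ℤ)^g) + ((-1)^(x*T % d) - (-1)^(x*T)) := by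
        intro x _
        rw [sum_gapBlock hd0 hdodd x, ← hkey x]
        ring
      rw [Finset.sum_biUnion hCdisj, Finset.mul_sum,
        Finset.sum_congr rfl hstep, Finset.sum_add_distrib, ← Finset.sum_mul,
        Finset.sum_sub_distrib, heps1, heps, hG's, hprod]
      ring

/-- For `S` free generated by telescopic `T = (t_0, …, t_k)` with `gcd T = 1` and `t_0`
odd, with `I = {0 ≤ i ≤ k : t_i even}`,
`O(G(S)) - E(G(S)) = -1/2 + (1/2) ∏_{i ∈ I} c_i`, i.e.
`2 (O(G(S)) - E(G(S))) = -1 + ∏_{i ∈ I} c_i`. -/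
theorem parity_free_odd_first (t : ℕ → ℕ) (k : ℕ) (htel : IsTelescopic t k)
    (hgcd : seqD t k = 1) (h0 : Odd (t 0)) :
    2 * ((countOdd (genBy t (k + 1))ᶜ : ℤ) - (countEven (genBy t (k + 1))ᶜ : ℤ))
      = -1 + ∏ i ∈ (Finset.range (k + 1)).filter (fun i => Even (t i)), (seqC t i : ℤ) := by
  obtain ⟨G, hGc, hGs⟩ := main_ind k t htel hgcd h0
  have hodd : countOdd (genBy t (k+1))ᶜ = (G.filter (fun n => Odd n)).card := by
    rw [← hGc]
    unfold countOdd
    rw [show {x ∈ (↑G : Set ℕ) | Odd x} = ↑(G.filter (fun n => Odd n)) by ext m; simp,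
      Set.ncard_coe_finset]
  have heven : countEven (genBy t (k+1))ᶜ = (G.filter (fun n => Even n)).card := by
    rw [← hGc]
    unfold countEven
    rw [show {x ∈ (↑G : Set ℕ) | Even x} = ↑(G.filter (fun n => Even n)) by ext m; simp,
      Set.ncard_coe_finset]
  have hsplit : ∑ n ∈ G, (-1:ℤ)^n
      = ((G.filter (fun n => Even n)).card : ℤ) - ((G.filter (fun n => Odd n)).card : ℤ) := by
    rw [← Finset.sum_filter_add_sum_filter_not G (fun n => Even n)]
    have h1 : ∑ n ∈ G.filter (fun n => Even n), (-1:ℤ)^n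
        = ((G.filter (fun n => Even n)).card : ℤ) := by
      rw [Finset.sum_congr rfl (fun n hn => (Finset.mem_filter.1 hn).2.neg_one_pow)]
      simp
    have h2 : ∑ n ∈ G.filter (fun n => ¬ Even n), (-1:ℤ)^n
        = -((G.filter (fun n => Odd n)).card : ℤ) := by
      have hff : G.filter (fun n => ¬ Even n) = G.filter (fun n => Odd n) := by
        apply Finset.filter_congr
        intro n _
        simp [Nat.not_even_iff_odd]
      rw [hff, Finset.sum_congr rfl
        (fun n hn => ((Finset.mem_filter.1 hn).2).neg_one_pow)]
      simp [mul_comm]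
    rw [h1, h2]
    ring
  rw [hodd, heven]
  rw [hsplit] at hGs
  linarith
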